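/- (Dissipation identity) Assume G is conserved by X. If x is a differentiable curve on an interval that solves the geometrically dissipated system, then for every t in that interval the derivative of G∘x at t equals −det(Σ^{(∇F₁(x(t)),…,∇F_k(x(t)),∇G(x(t)))}_{(∇F₁(x(t)),…,∇F_k(x(t)),∇G(x(t)))}), and in particular (G∘x)′(t) ≤ 0. -/

import Mathlib

open scoped RealInnerProductSpace BigOperators
open Filter Topology

/-- `Σ^{(a₁,…,a_r)}_{(b₁,…,b_s)}`: the `r × s` real matrix whose `(i,j)` entry is `⟪b j, a i⟫`. -/
noncomputable def sigmaMat {E : Type*} [NormedAddCommGroup E] [InnerProductSpace ℝ E]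
    {r s : ℕ} (a : Fin r → E) (b : Fin s → E) : Matrix (Fin r) (Fin s) ℝ :=
  Matrix.of fun i j => ⟪b j, a i⟫

/-- The standard control vector `v₀(w₁,…,w_{k+1},u)`: there are `k+1` vectors `w`
(`k+1 ≥ 1` encodes the requirement that the number of `w`-vectors is at least one).
With `0`-indexing, the sign `(-1)^(i+k+1)` below is the paper's `(-1)^{i+k+1}` for
`1`-indexed `i` and `k+1` vectors. -/
noncomputable def stdControl {E : Type*} [NormedAddCommGroup E] [InnerProductSpace ℝ E]
    {k : ℕ} (w : Fin (k + 1) → E) (u : E) : E :=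
  (∑ i : Fin (k + 1),
      ((-1 : ℝ) ^ ((i : ℕ) + k + 1) *
        (sigmaMat w (Fin.snoc (w ∘ i.succAbove) u)).det) • w i) +
    (sigmaMat w w).det • u

/-- The family of gradients `(∇F₁(x),…,∇F_{k+1}(x),∇G(x))`. -/
noncomputable def gradFam {E : Type*} [NormedAddCommGroup E] [InnerProductSpace ℝ E]
    [FiniteDimensional ℝ E] {k : ℕ} (F : Fin (k + 1) → E → ℝ) (G : E → ℝ) (x : E) :
    Fin (k + 1 + 1) → E :=
  Fin.snoc (fun i => gradient (F i) x) (gradient G x)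

/-- The standard control vector field `x ↦ v₀(∇F₁(x),…,∇F_{k+1}(x),∇G(x))`. -/
noncomputable def v0Field {E : Type*} [NormedAddCommGroup E] [InnerProductSpace ℝ E]
    [FiniteDimensional ℝ E] {k : ℕ} (F : Fin (k + 1) → E → ℝ) (G : E → ℝ) (x : E) : E :=
  stdControl (fun i => gradient (F i) x) (gradient G x)

/-- `det Σ^{(∇F₁(x),…,∇F_{k+1}(x),∇G(x))}_{(∇F₁(x),…,∇F_{k+1}(x),∇G(x))}`. -/
noncomputable def gramDetFG {E : Type*} [NormedAddCommGroup E] [InnerProductSpace ℝ E]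
    [FiniteDimensional ℝ E] {k : ℕ} (F : Fin (k + 1) → E → ℝ) (G : E → ℝ) (x : E) : ℝ :=
  (sigmaMat (gradFam F G x) (gradFam F G x)).det

/-- The set `Inv = {x | det Σ^{(∇F(x),∇G(x))}_{(∇F(x),∇G(x))} = 0}`. -/
def invSet {E : Type*} [NormedAddCommGroup E] [InnerProductSpace ℝ E]
    [FiniteDimensional ℝ E] {k : ℕ} (F : Fin (k + 1) → E → ℝ) (G : E → ℝ) : Set E :=
  {x | gramDetFG F G x = 0}

-- (auxiliary lemmas below, theorem after)
-- Gram matrices have nonnegative determinant.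
lemma sigmaMat_self_det_nonneg {E : Type*} [NormedAddCommGroup E] [InnerProductSpace ℝ E]
    [FiniteDimensional ℝ E] {m : ℕ} (c : Fin m → E) : 0 ≤ (sigmaMat c c).det := by
  set b := stdOrthonormalBasis ℝ E
  set B : Matrix (Fin m) (Fin (Module.finrank ℝ E)) ℝ :=
    Matrix.of fun i j => ⟪b j, c i⟫ with hB
  have hfact : sigmaMat c c = B * B.conjTranspose := by
    ext i j
    simp only [sigmaMat, Matrix.of_apply, Matrix.mul_apply, Matrix.conjTranspose_apply, hB,
      star_trivial]
    have := b.sum_inner_mul_inner (c i) (c j)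
    calc ⟪c j, c i⟫ = ⟪c i, c j⟫ := real_inner_comm _ _
      _ = ∑ l, ⟪c i, b l⟫ * ⟪b l, c j⟫ := this.symm
      _ = ∑ l, ⟪b l, c i⟫ * ⟪b l, c j⟫ := by
          simp_rw [real_inner_comm (c i)]
  have hps : (B * B.conjTranspose).PosSemidef := Matrix.posSemidef_self_mul_conjTranspose B
  rw [hfact, hps.isHermitian.det_eq_prod_eigenvalues]
  exact Finset.prod_nonneg fun i _ => by
    simpa using hps.eigenvalues_nonneg i

-- Cofactor expansion.
lemma inner_stdControl {E : Type*} [NormedAddCommGroup E] [InnerProductSpace ℝ E]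
    {k : ℕ} (w : Fin (k + 1) → E) (u : E) :
    ⟪u, stdControl w u⟫ =
      (sigmaMat (Fin.snoc w u) (Fin.snoc w u : Fin (k + 1 + 1) → E)).det := by
  set c : Fin (k + 1 + 1) → E := Fin.snoc w u with hc
  set M := sigmaMat c c with hM
  have hexp := Matrix.det_succ_row M (Fin.last (k + 1))
  rw [Fin.sum_univ_castSucc] at hexp
  have hlastterm :
      ((-1 : ℝ)) ^ ((Fin.last (k+1) : ℕ) + ((Fin.last (k+1)) : ℕ)) * M (Fin.last (k+1)) (Fin.last (k+1)) *
        (M.submatrix (Fin.last (k+1)).succAbove (Fin.last (k+1)).succAbove).det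
        = (sigmaMat w w).det * ⟪u, u⟫ := by
    have h1 : M (Fin.last (k+1)) (Fin.last (k+1)) = ⟪u, u⟫ := by
      simp [hM, sigmaMat, hc]
    have h2 : M.submatrix (Fin.last (k+1)).succAbove (Fin.last (k+1)).succAbove
        = sigmaMat w w := by
      ext i j
      simp [hM, sigmaMat, hc, Fin.succAbove_last]
    have he : Even ((Fin.last (k+1) : ℕ) + ((Fin.last (k+1)) : ℕ)) := ⟨_, rfl⟩
    rw [h1, h2, Even.neg_one_pow he]
    ring
  have hterm : ∀ i : Fin (k + 1),
      ((-1 : ℝ)) ^ ((Fin.last (k+1) : ℕ) + ((Fin.castSucc i) : ℕ)) * M (Fin.last (k+1)) (Fin.castSucc i) *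
        (M.submatrix (Fin.last (k+1)).succAbove (Fin.castSucc i).succAbove).det
        = ((-1 : ℝ) ^ ((i : ℕ) + k + 1) *
            (sigmaMat w (Fin.snoc (w ∘ i.succAbove) u)).det) * ⟪u, w i⟫ := by
    intro i
    have h1 : M (Fin.last (k+1)) (Fin.castSucc i) = ⟪u, w i⟫ := by
      simp [hM, sigmaMat, hc, real_inner_comm]
    have h2 : M.submatrix (Fin.last (k+1)).succAbove (Fin.castSucc i).succAbove
        = sigmaMat w (Fin.snoc (w ∘ i.succAbove) u) := by
      ext i' j'
      simp only [hM, Matrix.submatrix_apply, sigmaMat, Matrix.of_apply, Fin.succAbove_last]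
      refine Fin.lastCases ?_ (fun m => ?_) j'
      · rw [Fin.succAbove_castSucc_of_le i (Fin.last k) (Fin.le_last i)]
        simp [hc]
      · rw [Fin.castSucc_succAbove_castSucc]
        simp [hc]
    have h3 : ((-1 : ℝ)) ^ ((Fin.last (k+1) : ℕ) + ((Fin.castSucc i) : ℕ))
        = (-1 : ℝ) ^ ((i : ℕ) + k + 1) := by
      rw [show ((Fin.last (k+1) : ℕ) + ((Fin.castSucc i) : ℕ)) = (i : ℕ) + k + 1 by
        simp [Fin.val_last]; omega]
    rw [h1, h2, h3]
    ring
  rw [hexp, hlastterm]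
  rw [Finset.sum_congr rfl fun i _ => hterm i]
  rw [stdControl, inner_add_right, inner_sum, real_inner_smul_right]
  simp_rw [real_inner_smul_right]

/-- dissipation identity: along a solution of the geometrically dissipated
system, the derivative of `G ∘ x` at `t` equals minus the Gram determinant of
`(∇F₁(x t),…,∇F_{k+1}(x t),∇G(x t))`; in particular it is `≤ 0`. -/
theorem hasDerivAt_G_comp_solution {E : Type*} [NormedAddCommGroup E] [InnerProductSpace ℝ E]
    [FiniteDimensional ℝ E] {k : ℕ} (F : Fin (k + 1) → E → ℝ) (G : E → ℝ) (X : E → E)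
    (hF : ∀ i, ContDiff ℝ 1 (F i)) (hG : ContDiff ℝ 1 G)
    (hcons : ∀ y : E, ⟪gradient G y, X y⟫ = 0)
    (I : Set ℝ) (hI : I.OrdConnected) (x : ℝ → E)
    (hx : ∀ t ∈ I, HasDerivAt x (X (x t) - v0Field F G (x t)) t) :
    ∀ t ∈ I, HasDerivAt (fun s => G (x s)) (-(gramDetFG F G (x t))) t ∧
      -(gramDetFG F G (x t)) ≤ 0 := by
  intro t ht
  have hgram : ⟪gradient G (x t), v0Field F G (x t)⟫ = gramDetFG F G (x t) := by
    rw [v0Field, inner_stdControl]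
    rfl
  have hGd : HasGradientAt G (gradient G (x t)) (x t) :=
    ((hG.differentiable one_ne_zero) (x t)).hasGradientAt
  have hderiv : HasDerivAt (fun s => G (x s))
      (⟪gradient G (x t), X (x t) - v0Field F G (x t)⟫) t := by
    have := hGd.hasFDerivAt.comp_hasDerivAt t (hx t ht)
    simpa [InnerProductSpace.toDual_apply_apply, Function.comp_def] using this
  have hval : ⟪gradient G (x t), X (x t) - v0Field F G (x t)⟫ = -(gramDetFG F G (x t)) := by
    rw [inner_sub_right, hcons, hgram, zero_sub]
  refine ⟨hval ▸ hderiv, neg_nonpos.mpr ?_⟩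
  exact sigmaMat_self_det_nonneg _
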